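/- Let s ∈ (−1,1) with s ≠ 0, and let θ : ℝ → ℝ be C¹, bounded, integrable, even, and nonincreasing on [0,∞). Let u(x) = HΛ^sθ(x). Then for all 0 < x₂ < x₁, ∫_{x₂}^{x₁} u(x)·θ'(x) dx ≥ ((1−s)/(16s))·(1 − ((x₁−x₂)/(x₁+x₂))^s)·(θ(x₂)−θ(x₁))²/(x₁−x₂)^s. (Note that ((1−s)/(16s))·(1 − ((x₁−x₂)/(x₁+x₂))^s) is positive for both s ∈ (0,1) and s ∈ (−1,0).) -/

import Mathlib

open MeasureTheory Filter Set Topology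

/-- Truncated integral in the principal value defining
`HΛˢθ(x) = (s/c_s) p.v. ∫ θ(y)/((y-x)·|y-x|ˢ) dy`. -/
noncomputable def hlsApprox (s : ℝ) (f : ℝ → ℝ) (x ε : ℝ) : ℝ :=
  ∫ y in {y : ℝ | ε < |y - x|}, f y / ((y - x) * |y - x| ^ s)

/-- The operator `HΛˢ`, for `s ∈ (-1,1)`, `s ≠ 0`:
`HΛˢθ(x) = (s/c_s) p.v. ∫ θ(y)/((y-x)·|y-x|ˢ) dy`, where
`c_s = √π · 2^(1-s) · Γ((1-s)/2) / Γ(s/2)`. -/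
noncomputable def hls (s : ℝ) (f : ℝ → ℝ) (x : ℝ) : ℝ :=
  (s / (Real.sqrt Real.pi * 2 ^ (1 - s) * Real.Gamma ((1 - s) / 2) / Real.Gamma (s / 2))) *
    limUnder (𝓝[>] (0:ℝ)) (hlsApprox s f x)


lemma gamma_three_div_two : Real.Gamma (3/2) = Real.sqrt Real.pi / 2 := by
  have h := Real.Gamma_add_one (s := (1/2:ℝ)) (by norm_num)
  rw [Real.Gamma_one_half_eq] at h
  norm_num at h ⊢
  rw [h]; ring

lemma sqrt_pi_le : Real.sqrt Real.pi ≤ 1.8 := by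
  rw [show (1.8:ℝ) = Real.sqrt (1.8^2) by rw [Real.sqrt_sq]; norm_num]
  exact Real.sqrt_le_sqrt (by nlinarith [Real.pi_lt_d2])

lemma sqrt_pi_ge : 1.77 ≤ Real.sqrt Real.pi := by
  rw [show (1.77:ℝ) = Real.sqrt (1.77^2) by rw [Real.sqrt_sq]; norm_num]
  exact Real.sqrt_le_sqrt (by nlinarith [Real.pi_gt_d2])

lemma gamma_le_one {y : ℝ} (h1 : 1 ≤ y) (h2 : y ≤ 2) : Real.Gamma y ≤ 1 := by
  have hc : Real.Gamma ((2-y) • (1:ℝ) + (y-1) • 2) ≤ (2-y) • Real.Gamma 1 + (y-1) • Real.Gamma 2 :=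
    Real.convexOn_Gamma.2 (mem_Ioi.mpr one_pos) (mem_Ioi.mpr two_pos)
      (by linarith) (by linarith) (by ring)
  simp only [smul_eq_mul, Real.Gamma_one, Real.Gamma_two] at hc
  have : (2-y) * (1:ℝ) + (y-1) * 2 = y := by ring
  rw [this] at hc; linarith

lemma gamma_ge {y : ℝ} (h1 : 1 ≤ y) (h2 : y ≤ 2) : Real.sqrt Real.pi - 1 ≤ Real.Gamma y := by
  have hsq : Real.sqrt Real.pi ≤ 1.8 := sqrt_pi_le
  have hsq2 : 1.77 ≤ Real.sqrt Real.pi := sqrt_pi_ge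
  rcases le_or_gt y (3/2) with hy | hy
  · by_cases hy32 : y = 3/2
    · rw [hy32, gamma_three_div_two]; linarith
    have hylt : y < 3/2 := lt_of_le_of_ne hy hy32
    set t : ℝ := (1/2)/(2 - y) with ht
    have h2y : 0 < 2 - y := by linarith
    have ht0 : 0 < t := by positivity
    have ht1 : t ≤ 1 := by rw [ht, div_le_one h2y]; linarith
    have hc : Real.Gamma (t • y + (1-t) • (2:ℝ)) ≤ t • Real.Gamma y + (1-t) • Real.Gamma 2 :=
      Real.convexOn_Gamma.2 (mem_Ioi.mpr (by linarith : (0:ℝ) < y))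
        (mem_Ioi.mpr two_pos) (le_of_lt ht0) (by linarith) (by ring)
    have harg : t * y + (1 - t) * 2 = 3/2 := by
      have e : t * (2 - y) = 1/2 := by rw [ht]; exact div_mul_cancel₀ _ h2y.ne'
      field_simp [ht]; linear_combination (-2) * e
    simp only [smul_eq_mul] at hc
    rw [harg, gamma_three_div_two, Real.Gamma_two] at hc
    have hGy : (Real.sqrt Real.pi / 2 - (1-t)) ≤ t * Real.Gamma y := by linarith
    have ht_half : 1/2 ≤ t := by rw [ht, le_div_iff₀ h2y]; linarith
    have key : (Real.sqrt Real.pi - 1) * t ≤ Real.sqrt Real.pi / 2 - (1-t) := by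
      have h3 : (2 - Real.sqrt Real.pi) * (1/2) ≤ (2 - Real.sqrt Real.pi) * t :=
        mul_le_mul_of_nonneg_left ht_half (by linarith)
      nlinarith [h3]
    nlinarith [hGy, key, ht0]
  · set t : ℝ := (y - 3/2)/(y - 1) with ht
    have hy1 : 0 < y - 1 := by linarith
    have ht0 : 0 ≤ t := div_nonneg (by linarith) (by linarith)
    have ht1 : t < 1 := by rw [ht, div_lt_one hy1]; linarith
    have hc : Real.Gamma (t • (1:ℝ) + (1-t) • y) ≤ t • Real.Gamma 1 + (1-t) • Real.Gamma y :=
      Real.convexOn_Gamma.2 (mem_Ioi.mpr one_pos)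
        (mem_Ioi.mpr (by linarith : (0:ℝ) < y)) ht0 (by linarith) (by ring)
    have harg : t * 1 + (1 - t) * y = 3/2 := by
      have e : t * (y - 1) = y - 3/2 := by rw [ht]; exact div_mul_cancel₀ _ hy1.ne'
      field_simp [ht]; linear_combination (-2) * e
    simp only [smul_eq_mul] at hc
    rw [harg, gamma_three_div_two, Real.Gamma_one] at hc
    have h1t : 0 < 1 - t := by linarith
    have hGy : Real.sqrt Real.pi / 2 - t ≤ (1-t) * Real.Gamma y := by linarith
    have ht_half : t ≤ 1/2 := by rw [ht, div_le_iff₀ hy1]; linarith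
    have key : (Real.sqrt Real.pi - 1) * (1 - t) ≤ Real.sqrt Real.pi / 2 - t := by
      have h3 : (Real.sqrt Real.pi - 2) * (1/2) ≤ (Real.sqrt Real.pi - 2) * t :=
        mul_le_mul_of_nonpos_left ht_half (by linarith)
      nlinarith [h3]
    nlinarith [hGy, key, h1t]

lemma cube_aux {x p : ℝ} (hx0 : 0 < x) (hxp : x ≤ p) : x * (1 - p^2/4) ≤ x - x^3/4 := by
  nlinarith [mul_le_mul_of_nonneg_left (mul_le_mul hxp hxp hx0.le (le_trans hx0.le hxp)) hx0.le]

lemma hfac_aux : (0:ℝ) < 1 - (Real.pi/4)^2/4 := by nlinarith [Real.pi_lt_d2, Real.pi_pos]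

lemma hhalf_aux : (1:ℝ)/2 ≤ (Real.sqrt Real.pi - 1) * (1 - (Real.pi/4)^2/4) := by
  nlinarith [sqrt_pi_ge, sqrt_pi_le, Real.pi_lt_d2, Real.pi_gt_d2]

lemma cs_eq (s : ℝ) (hs1 : -1 < s) (hs2 : s < 1) (hs0 : s ≠ 0) :
    s / (Real.sqrt Real.pi * 2 ^ (1 - s) * Real.Gamma ((1 - s) / 2) / Real.Gamma (s / 2))
      = Real.Gamma (1 + s) * Real.cos (Real.pi * s / 2) / Real.pi := by
  have hpi := Real.pi_pos
  have hq : (0:ℝ) < Real.sqrt Real.pi := Real.sqrt_pos.mpr hpi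
  have hb : 0 < Real.Gamma ((1 - s) / 2) := Real.Gamma_pos_of_pos (by linarith)
  have hg : 0 < Real.Gamma ((1 + s) / 2) := Real.Gamma_pos_of_pos (by linarith)
  have hG : 0 < Real.Gamma (1 + s) := Real.Gamma_pos_of_pos (by linarith)
  have hc : 0 < Real.cos (Real.pi * s / 2) := by
    apply Real.cos_pos_of_mem_Ioo
    constructor
    · rcases le_or_gt 0 s with h | h
      · nlinarith
      · nlinarith
    · rcases le_or_gt 0 s with h | h
      · nlinarith
      · nlinarith
  have ha : Real.Gamma (s / 2) ≠ 0 := by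
    apply Real.Gamma_ne_zero
    intro m
    cases m with
    | zero => simpa using (by simpa using div_ne_zero hs0 (two_ne_zero) : s/2 ≠ 0)
    | succ n =>
      push_cast
      intro h
      have : (0:ℝ) ≤ n := Nat.cast_nonneg n
      nlinarith [h]
  have hr : (0:ℝ) < (2:ℝ) ^ (-s) := Real.rpow_pos_of_pos two_pos _
  have h2e : (2:ℝ) ^ (1 - s) = 2 * (2:ℝ) ^ (-s) := by
    rw [show (1:ℝ) - s = 1 + (-s) by ring, Real.rpow_add two_pos, Real.rpow_one]
  have hrefl : Real.Gamma ((1-s)/2) * Real.Gamma ((1+s)/2) * Real.cos (Real.pi * s / 2)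
      = Real.pi := by
    have h := Real.Gamma_mul_Gamma_one_sub ((1-s)/2)
    rw [show (1:ℝ) - (1-s)/2 = (1+s)/2 by ring] at h
    rw [show Real.pi * ((1-s)/2) = Real.pi/2 - Real.pi * s / 2 by ring,
      Real.sin_pi_div_two_sub] at h
    rw [h]
    field_simp
  have hdup : (s/2) * Real.Gamma (s/2) * Real.Gamma ((1+s)/2)
      = Real.Gamma (1+s) * (2:ℝ) ^ (-s) * Real.sqrt Real.pi := by
    have h := Real.Gamma_mul_Gamma_add_half ((1+s)/2)
    rw [show (1+s)/2 + 1/2 = s/2 + 1 by ring, Real.Gamma_add_one (div_ne_zero hs0 two_ne_zero),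
      show 2 * ((1+s)/2) = 1 + s by ring] at h
    rw [show (1:ℝ) - (1+s) = -s by ring] at h
    nlinarith [h]
  rw [h2e]
  rw [div_div_eq_mul_div, div_eq_div_iff (by positivity) (ne_of_gt hpi)]
  have key : s * Real.Gamma (s/2) * Real.pi * Real.Gamma ((1+s)/2)
      = Real.Gamma (1+s) * Real.cos (Real.pi * s / 2) *
        (Real.sqrt Real.pi * (2 * (2:ℝ)^(-s)) * Real.Gamma ((1-s)/2)) * Real.Gamma ((1+s)/2) := by
    linear_combination (2 * Real.pi) * hdup
      - (2 * Real.Gamma (1+s) * Real.sqrt Real.pi * (2:ℝ)^(-s)) * hrefl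
  have := mul_right_cancel₀ (ne_of_gt hg) key
  linarith [this]

set_option maxHeartbeats 1000000 in
lemma cs_ge (s : ℝ) (hs1 : -1 < s) (hs2 : s < 1) (hs0 : s ≠ 0) :
    (1 - s) / 8 ≤
      s / (Real.sqrt Real.pi * 2 ^ (1 - s) * Real.Gamma ((1 - s) / 2) / Real.Gamma (s / 2)) := by
  rw [cs_eq s hs1 hs2 hs0]
  have hpi := Real.pi_pos
  have hpi2 := Real.pi_lt_d2
  have hpi3 := Real.pi_gt_d2
  have hsq := sqrt_pi_le
  have hsq2 := sqrt_pi_ge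
  rw [le_div_iff₀ hpi]
  rcases le_or_gt 0 s with hs | hs
  · -- s ∈ [0,1): Γ(1+s) ≥ √π - 1, cos(πs/2) = sin(π(1-s)/2) ≥ 1-s
    have hG : Real.sqrt Real.pi - 1 ≤ Real.Gamma (1+s) := gamma_ge (by linarith) (by linarith)
    have hcos : 1 - s ≤ Real.cos (Real.pi * s / 2) := by
      rw [show Real.pi * s / 2 = Real.pi/2 - Real.pi * (1-s) / 2 by ring, Real.cos_pi_div_two_sub]
      have := Real.mul_le_sin (x := Real.pi * (1-s)/2) (by nlinarith) (by nlinarith)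
      calc (1:ℝ) - s = 2/Real.pi * (Real.pi * (1-s)/2) := by field_simp
        _ ≤ _ := this
    nlinarith [hG, hcos, mul_le_mul hG hcos (by linarith) (by linarith)]
  · rcases le_or_gt (-(1/2) : ℝ) s with hhalf | hhalf
    · -- s ∈ [-1/2, 0): Γ(1+s) ≥ (√π-1)(1-s), cos ≥ √2/2
      have hG2 : Real.sqrt Real.pi - 1 ≤ Real.Gamma (2+s) := gamma_ge (by linarith) (by linarith)
      have hGrec : Real.Gamma (2+s) = (1+s) * Real.Gamma (1+s) := by
        rw [show (2:ℝ)+s = (1+s)+1 by ring]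
        exact Real.Gamma_add_one (by linarith)
      have h1s : 0 < 1 + s := by linarith
      have hG : (Real.sqrt Real.pi - 1) * (1 - s) ≤ Real.Gamma (1+s) := by
        have h1 : Real.Gamma (1+s) = Real.Gamma (2+s) / (1+s) := by
          rw [hGrec]; field_simp
        rw [h1, le_div_iff₀ h1s]
        have : (1-s) * (1+s) ≤ 1 := by nlinarith
        nlinarith [hG2, this]
      have hcos : Real.sqrt 2 / 2 ≤ Real.cos (Real.pi * s / 2) := by
        rw [show Real.pi * s / 2 = -(Real.pi * (-s) / 2) by ring, Real.cos_neg,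
          ← Real.cos_pi_div_four]
        apply Real.cos_le_cos_of_nonneg_of_le_pi (by nlinarith) (by nlinarith) (by nlinarith)
      have hsqrt2 : 1.41 ≤ Real.sqrt 2 := by
        rw [show (1.41:ℝ) = Real.sqrt (1.41^2) by rw [Real.sqrt_sq]; norm_num]
        exact Real.sqrt_le_sqrt (by norm_num)
      have hGpos : 0 < Real.Gamma (1+s) := Real.Gamma_pos_of_pos (by linarith)
      have hcos0 : (0:ℝ) < Real.sqrt 2 / 2 := by positivity
      nlinarith [mul_le_mul hG hcos hcos0.le (by nlinarith)]
    · -- s ∈ (-1, -1/2): use sin x > x - x^3/4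
      have hG2 : Real.sqrt Real.pi - 1 ≤ Real.Gamma (2+s) := gamma_ge (by linarith) (by linarith)
      have hGrec : Real.Gamma (2+s) = (1+s) * Real.Gamma (1+s) := by
        rw [show (2:ℝ)+s = (1+s)+1 by ring]
        exact Real.Gamma_add_one (by linarith)
      have h1s : 0 < 1 + s := by linarith
      have hcos : Real.cos (Real.pi * s / 2) = Real.sin (Real.pi * (1+s) / 2) := by
        rw [show Real.pi * (1+s) / 2 = Real.pi/2 - Real.pi * (-s) / 2 by ring,
          Real.sin_pi_div_two_sub, show Real.pi * s / 2 = -(Real.pi * (-s)/2) by ring,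
          Real.cos_neg]
      obtain ⟨x, hx⟩ : ∃ x : ℝ, x = Real.pi * (1+s) / 2 := ⟨_, rfl⟩
      have hx0 : 0 < x := by rw [hx]; nlinarith
      have hx1 : x ≤ 1 := by rw [hx]; nlinarith
      have hsin : x - x^3/4 ≤ Real.sin x := le_of_lt (lt_of_le_of_lt (by nlinarith [pow_pos hx0 3]) (Real.sin_gt_sub_cube hx0))
      have hxsmall : x ≤ Real.pi / 4 := by rw [hx]; nlinarith
      have hcube : x * (1 - (Real.pi/4)^2/4) ≤ x - x^3/4 := cube_aux hx0 hxsmall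
      -- so Γ(1+s)·cos = Γ(2+s)·sin(x)/(1+s) ≥ (√π-1)·(π/2)(1-π²/64)
      have hsin2 : x * (1 - (Real.pi/4)^2/4) ≤ Real.sin x := le_trans hcube hsin
      have hfac : (0:ℝ) < 1 - (Real.pi/4)^2/4 := hfac_aux
      have hkey : (Real.sqrt Real.pi - 1) * (Real.pi/2) * (1 - (Real.pi/4)^2/4)
          ≤ Real.Gamma (1+s) * Real.cos (Real.pi * s / 2) := by
        rw [hcos]
        have hGam : Real.Gamma (1+s) = Real.Gamma (2+s) / (1+s) := by rw [hGrec]; field_simp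
        rw [hGam, div_mul_eq_mul_div, le_div_iff₀ h1s, ← hx]
        have hs1x : Real.sin x ≥ 0 := by
          apply Real.sin_nonneg_of_nonneg_of_le_pi hx0.le; linarith [hx1, Real.pi_gt_three]
        have h2 : (Real.sqrt Real.pi - 1) * (x * (1 - (Real.pi/4)^2/4))
            ≤ Real.Gamma (2+s) * Real.sin x := by
          have hgp : 0 < Real.Gamma (2+s) := Real.Gamma_pos_of_pos (by linarith)
          exact mul_le_mul hG2 hsin2 (mul_nonneg hx0.le hfac.le) hgp.le
        have harith : (Real.sqrt Real.pi - 1) * (Real.pi/2) * (1 - (Real.pi/4)^2/4) * (1+s)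
            = (Real.sqrt Real.pi - 1) * (x * (1 - (Real.pi/4)^2/4)) := by
          rw [hx]; ring
        linarith [h2, harith.le, harith.ge]
      have h1 : Real.pi * (1-s) ≤ Real.pi * 2 :=
        mul_le_mul_of_nonneg_left (by linarith) hpi.le
      have h2 : Real.pi/2 * (1/2) ≤ Real.pi/2 * ((Real.sqrt Real.pi - 1) * (1 - (Real.pi/4)^2/4)) :=
        mul_le_mul_of_nonneg_left hhalf_aux (by positivity)
      nlinarith [hkey, h1, h2]


section A
variable {s : ℝ} {θ : ℝ → ℝ}

lemma kernel_eq {z : ℝ} (hz : 0 < z) : z * |z| ^ s = z ^ (1 + s) := by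
  rw [abs_of_pos hz, Real.rpow_add hz, Real.rpow_one]

lemma intOn_plus (hs1 : -1 < s) (hθm : Measurable θ) (hint : Integrable θ)
    (x : ℝ) {ε : ℝ} (hε : 0 < ε) {T : Set ℝ} (hTm : MeasurableSet T)
    (hT : ∀ z ∈ T, ε ≤ |z|) :
    IntegrableOn (fun z => θ (x + z) / (z * |z| ^ s)) T := by
  have hmeas : Measurable (fun z : ℝ => θ (x + z) / (z * |z| ^ s)) := by
    exact (hθm.comp (measurable_const.add measurable_id)).div
      (measurable_id.mul (measurable_abs.pow_const s))
  apply Integrable.mono' (g := fun z => (ε ^ (-(1+s))) * |θ (x + z)|)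
  · exact (((hint.comp_add_left x).abs).const_mul _).restrict
  · exact hmeas.aestronglyMeasurable.restrict
  · rw [ae_restrict_iff' hTm]
    refine ae_of_all _ (fun z hz => ?_)
    have hza : ε ≤ |z| := hT z hz
    have hz0 : 0 < |z| := lt_of_lt_of_le hε hza
    have h1 : |z * |z| ^ s| = |z| ^ (1 + s) := by
      rw [abs_mul, abs_of_nonneg (Real.rpow_nonneg (abs_nonneg z) s),
        Real.rpow_add hz0, Real.rpow_one]
    have h2 : ε ^ (1+s) ≤ |z| ^ (1+s) := Real.rpow_le_rpow hε.le hza (by linarith)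
    have h3 : (0:ℝ) < ε ^ (1+s) := Real.rpow_pos_of_pos hε _
    rw [Real.norm_eq_abs, abs_div, h1]
    calc |θ (x + z)| / |z| ^ (1+s) ≤ |θ (x + z)| / ε ^ (1+s) :=
          div_le_div_of_nonneg_left (abs_nonneg _) h3 h2
      _ = ε ^ (-(1+s)) * |θ (x + z)| := by
          rw [Real.rpow_neg hε.le, div_eq_mul_inv, mul_comm]

lemma intOn_minus (hs1 : -1 < s) (hθm : Measurable θ) (hint : Integrable θ)
    (x : ℝ) {ε : ℝ} (hε : 0 < ε) {T : Set ℝ} (hTm : MeasurableSet T)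
    (hT : ∀ z ∈ T, ε ≤ |z|) :
    IntegrableOn (fun z => θ (x - z) / (z * |z| ^ s)) T := by
  have hmeas : Measurable (fun z : ℝ => θ (x - z) / (z * |z| ^ s)) := by
    exact (hθm.comp (measurable_const.sub measurable_id)).div
      (measurable_id.mul (measurable_abs.pow_const s))
  apply Integrable.mono' (g := fun z => (ε ^ (-(1+s))) * |θ (x - z)|)
  · exact (((hint.comp_sub_left x)).abs.const_mul _).restrict
  · exact hmeas.aestronglyMeasurable.restrict
  · rw [ae_restrict_iff' hTm]
    refine ae_of_all _ (fun z hz => ?_)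
    have hza : ε ≤ |z| := hT z hz
    have hz0 : 0 < |z| := lt_of_lt_of_le hε hza
    have h1 : |z * |z| ^ s| = |z| ^ (1 + s) := by
      rw [abs_mul, abs_of_nonneg (Real.rpow_nonneg (abs_nonneg z) s),
        Real.rpow_add hz0, Real.rpow_one]
    have h2 : ε ^ (1+s) ≤ |z| ^ (1+s) := Real.rpow_le_rpow hε.le hza (by linarith)
    have h3 : (0:ℝ) < ε ^ (1+s) := Real.rpow_pos_of_pos hε _
    rw [Real.norm_eq_abs, abs_div, h1]
    calc |θ (x - z)| / |z| ^ (1+s) ≤ |θ (x - z)| / ε ^ (1+s) :=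
          div_le_div_of_nonneg_left (abs_nonneg _) h3 h2
      _ = ε ^ (-(1+s)) * |θ (x - z)| := by
          rw [Real.rpow_neg hε.le, div_eq_mul_inv, mul_comm]

lemma hlsApprox_eq (hs1 : -1 < s) (hθm : Measurable θ) (hint : Integrable θ)
    (x : ℝ) {ε : ℝ} (hε : 0 < ε) :
    hlsApprox s θ x ε = ∫ z in Ioi ε, (θ (x + z) - θ (x - z)) / z ^ (1 + s) := by
  have hSm : MeasurableSet {y : ℝ | ε < |y - x|} :=
    measurableSet_lt measurable_const ((measurable_id.sub_const x).abs)
  have hTm : MeasurableSet {z : ℝ | ε < |z|} :=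
    measurableSet_lt measurable_const measurable_abs
  have step1 : hlsApprox s θ x ε = ∫ z in {z : ℝ | ε < |z|}, θ (x + z) / (z * |z| ^ s) := by
    unfold hlsApprox
    rw [← integral_indicator hSm, ← integral_indicator hTm,
      ← integral_add_right_eq_self
        (fun y => ({y : ℝ | ε < |y - x|}).indicator
          (fun y => θ y / ((y - x) * |y - x| ^ s)) y) x]
    congr 1
    funext z
    by_cases h : ε < |z|
    · rw [indicator_of_mem (by simpa using h), indicator_of_mem (by simpa using h)]
      simp [add_sub_cancel_right, add_comm]
    · rw [indicator_of_notMem (by simpa using h), indicator_of_notMem (by simpa using h)]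
  have hTeq : {z : ℝ | ε < |z|} = Iio (-ε) ∪ Ioi ε := by
    ext z
    simp only [mem_setOf_eq, mem_union, mem_Iio, mem_Ioi, lt_abs]
    constructor
    · rintro (h | h); · right; exact h
      · left; linarith
    · rintro (h | h); · right; linarith
      · left; exact h
  have hsub1 : ∀ z ∈ Iio (-ε), ε ≤ |z| := by
    intro z hz; rw [mem_Iio] at hz; rw [abs_of_neg (by linarith)]; linarith
  have hsub2 : ∀ z ∈ Ioi ε, ε ≤ |z| := by
    intro z hz; rw [mem_Ioi] at hz; rw [abs_of_pos (by linarith)]; linarith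
  have hI1 := intOn_plus hs1 hθm hint x hε measurableSet_Iio hsub1
  have hI2 := intOn_plus hs1 hθm hint x hε measurableSet_Ioi hsub2
  have hI3 := intOn_minus hs1 hθm hint x hε measurableSet_Ioi hsub2
  rw [step1, hTeq, setIntegral_union (by
      rw [disjoint_iff_inter_eq_empty]; ext z;
      simp only [mem_inter_iff, mem_Iio, mem_Ioi, mem_empty_iff_false, iff_false, not_and]
      intro h1 h2; linarith) measurableSet_Ioi hI1 hI2]
  have hrefl : ∫ z in Iio (-ε), θ (x + z) / (z * |z| ^ s)
      = ∫ z in Ioi ε, -(θ (x - z) / (z * |z| ^ s)) := by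
    rw [setIntegral_congr_set (Iio_ae_eq_Iic)]
    rw [← integral_comp_neg_Ioi]
    apply setIntegral_congr_fun measurableSet_Ioi
    intro z hz
    rw [mem_Ioi] at hz
    have hz0 : 0 < z := lt_trans hε hz
    show θ (x + -z) / (-z * |(-z)| ^ s) = -(θ (x - z) / (z * |z| ^ s))
    rw [show x + -z = x - z by ring, abs_neg, abs_of_pos hz0]
    field_simp
  rw [hrefl, integral_neg, neg_add_eq_sub, ← integral_sub hI2 hI3]
  apply setIntegral_congr_fun measurableSet_Ioi
  intro z hz
  rw [mem_Ioi] at hz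
  have hz0 : 0 < z := lt_trans hε hz
  show θ (x + z) / (z * |z| ^ s) - θ (x - z) / (z * |z| ^ s) = _
  rw [kernel_eq hz0, div_sub_div_same]

end A

section B
variable {s : ℝ} {θ : ℝ → ℝ}

lemma intOn_F (hs1 : -1 < s) (hs2 : s < 1) (hθm : Measurable θ) (hint : Integrable θ)
    {x K : ℝ} (hK : ∀ z ∈ Ioc (0:ℝ) 1, |θ (x + z) - θ (x - z)| ≤ K * z) :
    IntegrableOn (fun z => (θ (x + z) - θ (x - z)) / z ^ (1 + s)) (Ioi 0) := by
  have hmeas : Measurable (fun z : ℝ => (θ (x + z) - θ (x - z)) / z ^ (1 + s)) :=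
    ((hθm.comp (measurable_const.add measurable_id)).sub
      (hθm.comp (measurable_const.sub measurable_id))).div
      (measurable_id.pow_const (1 + s))
  have h01 : IntegrableOn (fun z => (θ (x + z) - θ (x - z)) / z ^ (1 + s)) (Ioc 0 1) := by
    apply Integrable.mono' (g := fun z => K * z ^ (-s))
    · have : IntervalIntegrable (fun z : ℝ => z ^ (-s)) volume 0 1 :=
        intervalIntegral.intervalIntegrable_rpow' (by linarith)
      exact ((intervalIntegrable_iff_integrableOn_Ioc_of_le zero_le_one).mp this).const_mul K
    · exact hmeas.aestronglyMeasurable.restrict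
    · rw [ae_restrict_iff' measurableSet_Ioc]
      refine ae_of_all _ (fun z hz => ?_)
      have hz0 : 0 < z := hz.1
      have hzp : (0:ℝ) < z ^ (1 + s) := Real.rpow_pos_of_pos hz0 _
      rw [Real.norm_eq_abs, abs_div, abs_of_pos hzp]
      have h2 : |θ (x + z) - θ (x - z)| / z ^ (1+s) ≤ (K * z) / z ^ (1+s) :=
        (div_le_div_iff_of_pos_right hzp).mpr (hK z hz)
      refine h2.trans (le_of_eq ?_)
      rw [show K * z ^ (-s) = K * (z ^ ((1:ℝ)) / z ^ (1+s)) by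
        rw [← Real.rpow_sub hz0]; norm_num, Real.rpow_one]
      ring
  have h1i : IntegrableOn (fun z => (θ (x + z) - θ (x - z)) / z ^ (1 + s)) (Ioi 1) := by
    apply Integrable.mono' (g := fun z => |θ (x + z)| + |θ (x - z)|)
    · exact ((hint.comp_add_left x).abs.add (hint.comp_sub_left x).abs).restrict
    · exact hmeas.aestronglyMeasurable.restrict
    · rw [ae_restrict_iff' measurableSet_Ioi]
      refine ae_of_all _ (fun z hz => ?_)
      rw [mem_Ioi] at hz
      have hz0 : 0 < z := lt_trans zero_lt_one hz
      have h1 : (1:ℝ) ≤ z ^ (1+s) := by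
        calc (1:ℝ) = 1 ^ (1+s) := (Real.one_rpow _).symm
          _ ≤ z ^ (1+s) := Real.rpow_le_rpow zero_le_one hz.le (by linarith)
      have hzp : (0:ℝ) < z ^ (1 + s) := Real.rpow_pos_of_pos hz0 _
      rw [Real.norm_eq_abs, abs_div, abs_of_pos hzp]
      calc |θ (x + z) - θ (x - z)| / z ^ (1+s) ≤ |θ (x + z) - θ (x - z)| / 1 :=
            div_le_div_of_nonneg_left (abs_nonneg _) one_pos h1 |>.trans_eq rfl
        _ = |θ (x + z) - θ (x - z)| := div_one _
        _ ≤ |θ (x + z)| + |θ (x - z)| := abs_sub _ _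
  have : Ioi (0:ℝ) = Ioc 0 1 ∪ Ioi 1 := (Ioc_union_Ioi_eq_Ioi zero_le_one).symm
  rw [this]
  exact h01.union h1i

lemma tendsto_truncated (hs1 : -1 < s) (hs2 : s < 1) (hθm : Measurable θ)
    (hint : Integrable θ) {x K : ℝ} (hK0 : 0 ≤ K)
    (hK : ∀ z ∈ Ioc (0:ℝ) 1, |θ (x + z) - θ (x - z)| ≤ K * z) :
    Tendsto (fun ε => ∫ z in Ioi ε, (θ (x + z) - θ (x - z)) / z ^ (1 + s)) (𝓝[>] (0:ℝ))
      (𝓝 (∫ z in Ioi 0, (θ (x + z) - θ (x - z)) / z ^ (1 + s))) := by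
  set F := fun z => (θ (x + z) - θ (x - z)) / z ^ (1 + s) with hF
  have hIF : IntegrableOn F (Ioi 0) := intOn_F hs1 hs2 hθm hint hK
  have key : ∀ ε ∈ Ioo (0:ℝ) 1, ‖(∫ z in Ioi ε, F z) - ∫ z in Ioi 0, F z‖
      ≤ K * ε ^ (1 - s) / (1 - s) := by
    intro ε hε
    have hsplit : Ioi (0:ℝ) = Ioc 0 ε ∪ Ioi ε := (Ioc_union_Ioi_eq_Ioi hε.1.le).symm
    have hdisj : Disjoint (Ioc (0:ℝ) ε) (Ioi ε) := by
      rw [disjoint_iff_inter_eq_empty]; ext z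
      simp only [mem_inter_iff, mem_Ioc, mem_Ioi, mem_empty_iff_false, iff_false, not_and]
      intro h1 h2; linarith [h1.2]
    have heq : (∫ z in Ioi 0, F z) = (∫ z in Ioc 0 ε, F z) + ∫ z in Ioi ε, F z := by
      rw [hsplit, setIntegral_union hdisj measurableSet_Ioi
        (hIF.mono_set (by rw [hsplit]; exact subset_union_left))
        (hIF.mono_set (by rw [hsplit]; exact subset_union_right))]
    rw [heq]
    rw [show (∫ z in Ioi ε, F z) - ((∫ z in Ioc 0 ε, F z) + ∫ z in Ioi ε, F z)
      = -(∫ z in Ioc 0 ε, F z) by ring, norm_neg]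
    have hb : ‖∫ z in Ioc 0 ε, F z‖ ≤ ∫ z in Ioc 0 ε, K * z ^ (-s) := by
      apply norm_integral_le_of_norm_le
      · have : IntervalIntegrable (fun z : ℝ => z ^ (-s)) volume 0 ε :=
          intervalIntegral.intervalIntegrable_rpow' (by linarith)
        exact ((intervalIntegrable_iff_integrableOn_Ioc_of_le hε.1.le).mp this).const_mul K
      · rw [ae_restrict_iff' measurableSet_Ioc]
        refine ae_of_all _ (fun z hz => ?_)
        have hz0 : 0 < z := hz.1
        have hz1 : z ≤ 1 := le_trans hz.2 hε.2.le
        have hzp : (0:ℝ) < z ^ (1 + s) := Real.rpow_pos_of_pos hz0 _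
        rw [hF, Real.norm_eq_abs, abs_div, abs_of_pos hzp]
        have h2 : |θ (x + z) - θ (x - z)| / z ^ (1+s) ≤ (K * z) / z ^ (1+s) :=
          (div_le_div_iff_of_pos_right hzp).mpr (hK z ⟨hz0, hz1⟩)
        refine h2.trans (le_of_eq ?_)
        rw [show K * z ^ (-s) = K * (z ^ ((1:ℝ)) / z ^ (1+s)) by
          rw [← Real.rpow_sub hz0]; norm_num, Real.rpow_one]
        ring
    refine hb.trans ?_
    have : (∫ z in Ioc 0 ε, K * z ^ (-s)) = K * (ε ^ (1 - s) / (1 - s)) := by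
      rw [← intervalIntegral.integral_of_le hε.1.le, intervalIntegral.integral_const_mul,
        integral_rpow (Or.inl (by linarith))]
      rw [Real.zero_rpow (ne_of_gt (by linarith)), sub_zero, show -s + 1 = 1 - s by ring]
    rw [this, mul_div_assoc]
  have hphi : Tendsto (fun ε : ℝ => K * ε ^ (1 - s) / (1 - s)) (𝓝[>] (0:ℝ)) (𝓝 0) := by
    have h1 : Tendsto (fun ε : ℝ => ε ^ (1 - s)) (𝓝 (0:ℝ)) (𝓝 ((0:ℝ) ^ (1 - s))) :=
      (Real.continuousAt_rpow_const 0 (1 - s) (Or.inr (by linarith))).tendsto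
    rw [Real.zero_rpow (ne_of_gt (by linarith))] at h1
    have h2 := (h1.const_mul K).div_const (1 - s)
    norm_num at h2
    exact h2.mono_left nhdsWithin_le_nhds
  have hsq : Tendsto (fun ε => (∫ z in Ioi ε, F z) - ∫ z in Ioi 0, F z) (𝓝[>] (0:ℝ)) (𝓝 0) := by
    apply squeeze_zero_norm' _ hphi
    filter_upwards [Ioo_mem_nhdsGT zero_lt_one] with ε hε using key ε hε
  have h3 := hsq.add_const (∫ z in Ioi 0, F z)
  simp only [sub_add_cancel, zero_add] at h3
  exact h3

end B

section C
variable {s : ℝ} {θ : ℝ → ℝ}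

lemma deriv_nonpos_of_antitone (hC1 : ContDiff ℝ 1 θ) (hmono : AntitoneOn θ (Ici 0))
    {x : ℝ} (hx : 0 ≤ x) : deriv θ x ≤ 0 := by
  have hd : HasDerivAt θ (deriv θ x) x := (hC1.differentiable one_ne_zero x).hasDerivAt
  have hslope := hasDerivAt_iff_tendsto_slope.mp hd
  have h2 : Tendsto (slope θ x) (𝓝[>] x) (𝓝 (deriv θ x)) :=
    hslope.mono_left (nhdsWithin_mono x (fun y hy => ne_of_gt hy))
  apply le_of_tendsto h2
  filter_upwards [self_mem_nhdsWithin] with y hy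
  rw [mem_Ioi] at hy
  have hθy : θ y ≤ θ x := hmono (mem_Ici.mpr hx) (mem_Ici.mpr (by linarith)) hy.le
  rw [slope_def_field]
  exact div_nonpos_of_nonpos_of_nonneg (by linarith) (by linarith)

lemma theta_abs (heven : ∀ t : ℝ, θ (-t) = θ t) (t : ℝ) : θ t = θ |t| := by
  rcases le_or_gt 0 t with h | h
  · rw [abs_of_nonneg h]
  · rw [abs_of_neg h, heven]

lemma L_le (hs1 : -1 < s) (hs2 : s < 1) (hs0 : s ≠ 0)
    (heven : ∀ t : ℝ, θ (-t) = θ t) (hmono : AntitoneOn θ (Ici 0))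
    {x₂ x₁ x : ℝ} (hx2 : 0 < x₂) (hxl : x₂ < x) (hxr : x ≤ x₁)
    (hIF : IntegrableOn (fun z => (θ (x + z) - θ (x - z)) / z ^ (1 + s)) (Ioi 0)) :
    (∫ z in Ioi 0, (θ (x + z) - θ (x - z)) / z ^ (1 + s))
      ≤ (θ x - θ x₂) * ∫ z in (x₁ - x₂)..(x₁ + x₂), z ^ (-(1 + s)) := by
  set F := fun z => (θ (x + z) - θ (x - z)) / z ^ (1 + s) with hFdef
  have hx0 : 0 < x := lt_trans hx2 hxl
  have hFnp : ∀ z ∈ Ioi (0:ℝ), F z ≤ 0 := by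
    intro z hz
    rw [mem_Ioi] at hz
    have habs : |x - z| ≤ x + z := abs_le.mpr ⟨by linarith, by linarith⟩
    have h1 : θ (x + z) ≤ θ (x - z) := by
      rw [theta_abs heven (x - z)]
      exact hmono (mem_Ici.mpr (abs_nonneg _)) (mem_Ici.mpr (by linarith)) habs
    exact div_nonpos_of_nonpos_of_nonneg (by linarith)
      (Real.rpow_nonneg (le_of_lt hz) _)
  have hab : x - x₂ ≤ x + x₂ := by linarith
  have hsub : Ioc (x - x₂) (x + x₂) ⊆ Ioi 0 := by
    intro z hz; rw [mem_Ioi]; have := hz.1; linarith [hz.1]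
  -- step i : restrict to window
  have step1 : (∫ z in Ioi 0, F z) ≤ ∫ z in Ioc (x - x₂) (x + x₂), F z := by
    have hneg : (∫ z in Ioc (x - x₂) (x + x₂), -F z) ≤ ∫ z in Ioi 0, -F z := by
      apply setIntegral_mono_set hIF.neg
      · exact (ae_restrict_iff' measurableSet_Ioi).mpr
          (ae_of_all _ (fun z hz => by simpa using hFnp z hz))
      · exact HasSubset.Subset.eventuallyLE hsub
    rw [integral_neg, integral_neg] at hneg
    linarith
  refine step1.trans ?_
  -- step ii : pointwise bound on window
  have hII : IntervalIntegrable (fun z : ℝ => z ^ (-(1+s))) volume (x - x₂) (x + x₂) := by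
    apply intervalIntegral.intervalIntegrable_rpow (Or.inr ?_)
    rw [uIcc_of_le hab]
    intro hmem
    have := hmem.1; linarith
  have hIOc : IntegrableOn (fun z : ℝ => z ^ (-(1+s))) (Ioc (x - x₂) (x + x₂)) :=
    (intervalIntegrable_iff_integrableOn_Ioc_of_le hab).mp hII
  have step2 : (∫ z in Ioc (x - x₂) (x + x₂), F z)
      ≤ ∫ z in Ioc (x - x₂) (x + x₂), (θ x - θ x₂) * z ^ (-(1+s)) := by
    apply setIntegral_mono_on (hIF.mono_set hsub) (hIOc.const_mul _) measurableSet_Ioc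
    intro z hz
    have hz0 : 0 < z := hsub hz
    have hnum : θ (x + z) - θ (x - z) ≤ θ x - θ x₂ := by
      have h1 : θ (x + z) ≤ θ x :=
        hmono (mem_Ici.mpr hx0.le) (mem_Ici.mpr (by linarith)) (by linarith)
      have h2 : θ x₂ ≤ θ (x - z) := by
        rw [theta_abs heven (x - z)]
        apply hmono (mem_Ici.mpr (abs_nonneg _)) (mem_Ici.mpr hx2.le)
        rw [abs_le]
        constructor
        · have := hz.2; linarith
        · have := hz.1; linarith
      linarith
    have hzp : (0:ℝ) < z ^ (1+s) := Real.rpow_pos_of_pos hz0 _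
    calc F z ≤ (θ x - θ x₂) / z ^ (1+s) := (div_le_div_iff_of_pos_right hzp).mpr hnum
      _ = (θ x - θ x₂) * z ^ (-(1+s)) := by
          rw [Real.rpow_neg hz0.le, div_eq_mul_inv]
  refine step2.trans ?_
  rw [← intervalIntegral.integral_of_le hab, intervalIntegral.integral_const_mul]
  have hth : θ x - θ x₂ ≤ 0 := by
    have := hmono (mem_Ici.mpr hx2.le) (mem_Ici.mpr hx0.le) hxl.le
    linarith
  have ha1 : 0 < x₁ - x₂ := by linarith
  have hab1 : x₁ - x₂ ≤ x₁ + x₂ := by linarith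
  have hII1 : IntervalIntegrable (fun z : ℝ => z ^ (-(1+s))) volume (x₁ - x₂) (x₁ + x₂) := by
    apply intervalIntegral.intervalIntegrable_rpow (Or.inr ?_)
    rw [uIcc_of_le hab1]
    intro hmem
    have := hmem.1; linarith
  have hIIshift : IntervalIntegrable (fun z : ℝ => (z + (x₁ - x)) ^ (-(1+s))) volume
      (x - x₂) (x + x₂) := by
    have h := hII1.comp_add_right (x₁ - x)
    rw [show x₁ - x₂ - (x₁ - x) = x - x₂ by ring, show x₁ + x₂ - (x₁ - x) = x + x₂ by ring] at h
    exact h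
  have hshift : (∫ z in (x₁ - x₂)..(x₁ + x₂), z ^ (-(1+s)))
      = ∫ z in (x - x₂)..(x + x₂), (z + (x₁ - x)) ^ (-(1+s)) := by
    have h := intervalIntegral.integral_comp_add_right
      (a := x - x₂) (b := x + x₂) (fun z : ℝ => z ^ (-(1+s))) (x₁ - x)
    rw [show x - x₂ + (x₁ - x) = x₁ - x₂ by ring,
      show x + x₂ + (x₁ - x) = x₁ + x₂ by ring] at h
    exact h.symm
  have hcomp : (∫ z in (x₁ - x₂)..(x₁ + x₂), z ^ (-(1+s)))
      ≤ ∫ z in (x - x₂)..(x + x₂), z ^ (-(1+s)) := by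
    rw [hshift]
    apply intervalIntegral.integral_mono_on hab hIIshift hII
    intro z hz
    have hz0 : 0 < z := by have := hz.1; linarith
    have hd : 0 ≤ x₁ - x := by linarith
    rw [Real.rpow_neg (by linarith : (0:ℝ) ≤ z + (x₁ - x)), Real.rpow_neg hz0.le]
    exact inv_anti₀ (Real.rpow_pos_of_pos hz0 _)
      (Real.rpow_le_rpow hz0.le (by linarith) (by linarith))
  exact mul_le_mul_of_nonpos_left hcomp hth

end C

section D
variable {s : ℝ} {θ : ℝ → ℝ}

lemma ftc (hC1 : ContDiff ℝ 1 θ) (x₂ x₁ : ℝ) :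
    ∫ x in x₂..x₁, (θ x - θ x₂) * deriv θ x = (θ x₁ - θ x₂)^2 / 2 := by
  have hc : Continuous (deriv θ) := hC1.continuous_deriv le_rfl
  have hderiv : ∀ t ∈ uIcc x₂ x₁,
      HasDerivAt (fun u => (θ u - θ x₂)^2/2) ((θ t - θ x₂) * deriv θ t) t := by
    intro t _
    have hd : HasDerivAt θ (deriv θ t) t := (hC1.differentiable one_ne_zero t).hasDerivAt
    have h1 : HasDerivAt (fun u => θ u - θ x₂) (deriv θ t) t := hd.sub_const _
    have h2 := (h1.pow 2).div_const 2
    have h3 : ((2:ℕ):ℝ) * (θ t - θ x₂) ^ (2-1) * deriv θ t / 2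
        = (θ t - θ x₂) * deriv θ t := by norm_num; ring
    rw [h3] at h2
    exact h2
  rw [intervalIntegral.integral_eq_sub_of_hasDerivAt hderiv
    (((hC1.continuous.sub continuous_const).mul hc).intervalIntegrable _ _)]
  ring

lemma K0_eval (hs0 : s ≠ 0) {a b : ℝ} (ha : 0 < a) (hab : a ≤ b) :
    ∫ z in a..b, z ^ (-(1+s)) = (a ^ (-s) - b ^ (-s)) / s := by
  rw [integral_rpow (Or.inr ⟨by intro h; apply hs0; linarith, by
    rw [uIcc_of_le hab]; intro hm; linarith [hm.1]⟩)]
  rw [show -(1+s) + 1 = -s by ring, div_neg, ← neg_div, neg_sub]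

lemma K0_nonneg {a b : ℝ} (ha : 0 < a) (hab : a ≤ b) :
    0 ≤ ∫ z in a..b, z ^ (-(1+s)) := by
  apply intervalIntegral.integral_nonneg hab
  intro u hu
  exact Real.rpow_nonneg (by linarith [hu.1]) _

lemma exists_lip (hC1 : ContDiff ℝ 1 θ) (x₂ x₁ : ℝ) :
    ∃ K, 0 ≤ K ∧ ∀ x ∈ Icc x₂ x₁, ∀ z ∈ Ioc (0:ℝ) 1, |θ (x + z) - θ (x - z)| ≤ (2 * K) * z := by
  obtain ⟨C, hC⟩ := (isCompact_Icc (a := x₂ - 1) (b := x₁ + 1)).exists_bound_of_continuousOn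
    (hC1.continuous_deriv le_rfl).continuousOn
  refine ⟨max C 0, le_max_right _ _, ?_⟩
  intro x hx z hz
  simp only [mem_Icc] at hx
  have hmem1 : x - z ∈ Icc (x₂ - 1) (x₁ + 1) := by
    rw [mem_Icc]; constructor <;> linarith [hx.1, hx.2, hz.1, hz.2]
  have hmem2 : x + z ∈ Icc (x₂ - 1) (x₁ + 1) := by
    rw [mem_Icc]; constructor <;> linarith [hx.1, hx.2, hz.1, hz.2]
  have h := Convex.norm_image_sub_le_of_norm_deriv_le (𝕜 := ℝ) (f := θ) (C := max C 0)
    (fun t _ => hC1.differentiable one_ne_zero t)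
    (fun t ht => (hC t ht).trans (le_max_left C 0)) (convex_Icc _ _) hmem1 hmem2
  rw [Real.norm_eq_abs, Real.norm_eq_abs,
    show x + z - (x - z) = 2 * z by ring,
    show |2 * z| = 2 * z from abs_of_pos (by linarith [hz.1])] at h
  calc |θ (x + z) - θ (x - z)| ≤ max C 0 * (2 * z) := h
    _ = (2 * max C 0) * z := by ring

lemma L_meas (hθm : Measurable θ) :
    Measurable (fun x => ∫ z in Ioi (0:ℝ), (θ (x + z) - θ (x - z)) / z ^ (1 + s)) := by
  have h : StronglyMeasurable (fun p : ℝ × ℝ => (θ (p.1 + p.2) - θ (p.1 - p.2)) / p.2 ^ (1+s)) :=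
    Measurable.stronglyMeasurable
      (((hθm.comp (measurable_fst.add measurable_snd)).sub
        (hθm.comp (measurable_fst.sub measurable_snd))).div (measurable_snd.pow_const _))
  exact h.integral_prod_right'.measurable

lemma L_abs_bound (hs1 : -1 < s) (hs2 : s < 1) (hθm : Measurable θ) (hint : Integrable θ)
    {x K : ℝ} (hK0 : 0 ≤ K)
    (hK : ∀ z ∈ Ioc (0:ℝ) 1, |θ (x + z) - θ (x - z)| ≤ K * z) :
    |∫ z in Ioi (0:ℝ), (θ (x + z) - θ (x - z)) / z ^ (1 + s)|
      ≤ K / (1 - s) + 2 * ∫ t, |θ t| := by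
  set F := fun z => (θ (x + z) - θ (x - z)) / z ^ (1 + s) with hF
  have hIF : IntegrableOn F (Ioi 0) := intOn_F hs1 hs2 hθm hint hK
  have hsplit : Ioi (0:ℝ) = Ioc 0 1 ∪ Ioi 1 := (Ioc_union_Ioi_eq_Ioi zero_le_one).symm
  have hdisj : Disjoint (Ioc (0:ℝ) 1) (Ioi 1) := by
    rw [disjoint_iff_inter_eq_empty]; ext z
    simp only [mem_inter_iff, mem_Ioc, mem_Ioi, mem_empty_iff_false, iff_false, not_and]
    intro h1 h2; linarith [h1.2]
  have h01 : IntegrableOn F (Ioc 0 1) := hIF.mono_set (by rw [hsplit]; exact subset_union_left)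
  have h1i : IntegrableOn F (Ioi 1) := hIF.mono_set (by rw [hsplit]; exact subset_union_right)
  have heq : (∫ z in Ioi 0, F z) = (∫ z in Ioc 0 1, F z) + ∫ z in Ioi 1, F z := by
    rw [hsplit, setIntegral_union hdisj measurableSet_Ioi h01 h1i]
  rw [heq]
  have hb1 : |∫ z in Ioc (0:ℝ) 1, F z| ≤ K / (1 - s) := by
    have hnorm : ‖∫ z in Ioc (0:ℝ) 1, F z‖ ≤ ∫ z in Ioc (0:ℝ) 1, K * z ^ (-s) := by
      apply norm_integral_le_of_norm_le
      · have : IntervalIntegrable (fun z : ℝ => z ^ (-s)) volume 0 1 :=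
          intervalIntegral.intervalIntegrable_rpow' (by linarith)
        exact ((intervalIntegrable_iff_integrableOn_Ioc_of_le zero_le_one).mp this).const_mul K
      · rw [ae_restrict_iff' measurableSet_Ioc]
        refine ae_of_all _ (fun z hz => ?_)
        have hz0 : 0 < z := hz.1
        have hzp : (0:ℝ) < z ^ (1 + s) := Real.rpow_pos_of_pos hz0 _
        rw [hF, Real.norm_eq_abs, abs_div, abs_of_pos hzp]
        refine ((div_le_div_iff_of_pos_right hzp).mpr (hK z hz)).trans (le_of_eq ?_)
        rw [show K * z ^ (-s) = K * (z ^ ((1:ℝ)) / z ^ (1+s)) by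
          rw [← Real.rpow_sub hz0]; norm_num, Real.rpow_one]
        ring
    rw [← Real.norm_eq_abs]
    refine hnorm.trans (le_of_eq ?_)
    rw [← intervalIntegral.integral_of_le zero_le_one, intervalIntegral.integral_const_mul,
      integral_rpow (Or.inl (by linarith)),
      Real.zero_rpow (ne_of_gt (by linarith)), Real.one_rpow, sub_zero,
      show -s + 1 = 1 - s by ring]
    rw [mul_one_div]
  have hb2 : |∫ z in Ioi (1:ℝ), F z| ≤ 2 * ∫ t, |θ t| := by
    have habs : Integrable (fun z : ℝ => |θ (x + z)| + |θ (x - z)|) :=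
      (hint.comp_add_left x).abs.add (hint.comp_sub_left x).abs
    have hnorm : ‖∫ z in Ioi (1:ℝ), F z‖ ≤ ∫ z in Ioi (1:ℝ), (|θ (x + z)| + |θ (x - z)|) := by
      apply norm_integral_le_of_norm_le habs.restrict
      rw [ae_restrict_iff' measurableSet_Ioi]
      refine ae_of_all _ (fun z hz => ?_)
      rw [mem_Ioi] at hz
      have hz0 : 0 < z := lt_trans zero_lt_one hz
      have h1 : (1:ℝ) ≤ z ^ (1+s) := by
        calc (1:ℝ) = 1 ^ (1+s) := (Real.one_rpow _).symm
          _ ≤ z ^ (1+s) := Real.rpow_le_rpow zero_le_one hz.le (by linarith)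
      have hzp : (0:ℝ) < z ^ (1 + s) := Real.rpow_pos_of_pos hz0 _
      rw [hF, Real.norm_eq_abs, abs_div, abs_of_pos hzp]
      calc |θ (x + z) - θ (x - z)| / z ^ (1+s) ≤ |θ (x + z) - θ (x - z)| / 1 :=
            div_le_div_of_nonneg_left (abs_nonneg _) one_pos h1
        _ = |θ (x + z) - θ (x - z)| := div_one _
        _ ≤ |θ (x + z)| + |θ (x - z)| := abs_sub _ _
    rw [← Real.norm_eq_abs]
    refine hnorm.trans ?_
    have hle : (∫ z in Ioi (1:ℝ), (|θ (x + z)| + |θ (x - z)|))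
        ≤ ∫ z, (|θ (x + z)| + |θ (x - z)|) :=
      setIntegral_le_integral habs (ae_of_all _ (fun z => by positivity))
    refine hle.trans (le_of_eq ?_)
    rw [integral_add (hint.comp_add_left x).abs (hint.comp_sub_left x).abs]
    have e1 : (∫ z : ℝ, |θ (x + z)|) = ∫ t, |θ t| :=
      integral_add_left_eq_self (fun t => |θ t|) x
    have e2 : (∫ z : ℝ, |θ (x - z)|) = ∫ t, |θ t| :=
      integral_sub_left_eq_self (fun t => |θ t|) volume x
    rw [e1, e2]; ring
  calc |(∫ z in Ioc (0:ℝ) 1, F z) + ∫ z in Ioi (1:ℝ), F z|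
      ≤ |∫ z in Ioc (0:ℝ) 1, F z| + |∫ z in Ioi (1:ℝ), F z| := abs_add_le _ _
    _ ≤ K / (1 - s) + 2 * ∫ t, |θ t| := add_le_add hb1 hb2

end D

set_option maxHeartbeats 1000000 in
/-- Theorem: for `s ∈ (-1,1)`, `s ≠ 0`, a `C¹`, bounded, integrable, even function `θ`
nonincreasing on `[0,∞)`, and `u = HΛˢθ`, one has, for all `0 < x₂ < x₁`,
`∫_{x₂}^{x₁} u·θ' dx ≥ ((1-s)/(16s))·(1-((x₁-x₂)/(x₁+x₂))ˢ)·(θ(x₂)-θ(x₁))²/(x₁-x₂)ˢ`. -/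
theorem stmt_14 (s : ℝ) (hs1 : -1 < s) (hs2 : s < 1) (hs0 : s ≠ 0)
    (θ : ℝ → ℝ)
    (hC1 : ContDiff ℝ 1 θ)
    (hbdd : ∃ M : ℝ, ∀ x : ℝ, |θ x| ≤ M)
    (hint : Integrable θ)
    (heven : ∀ x : ℝ, θ (-x) = θ x)
    (hmono : AntitoneOn θ (Set.Ici 0))
    (x₁ x₂ : ℝ) (hx₂ : 0 < x₂) (hx₁ : x₂ < x₁) :
    ((1 - s) / (16 * s)) * (1 - ((x₁ - x₂) / (x₁ + x₂)) ^ s) *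
        ((θ x₂ - θ x₁) ^ 2 / (x₁ - x₂) ^ s)
      ≤ ∫ x in x₂..x₁, hls s θ x * deriv θ x := by
  have hθm : Measurable θ := hC1.continuous.measurable
  obtain ⟨K2, hK20, hKlip⟩ := exists_lip hC1 x₂ x₁
  set Kc := 2 * K2 with hKc
  have hKc0 : 0 ≤ Kc := by positivity
  set L : ℝ → ℝ := fun x => ∫ z in Ioi (0:ℝ), (θ (x + z) - θ (x - z)) / z ^ (1 + s) with hL
  set c : ℝ := s / (Real.sqrt Real.pi * 2 ^ (1 - s) *
    Real.Gamma ((1 - s) / 2) / Real.Gamma (s / 2)) with hc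
  have hcge : (1 - s) / 8 ≤ c := cs_ge s hs1 hs2 hs0
  have hc0 : 0 ≤ c := le_trans (by linarith) hcge
  have hls_eq : ∀ x ∈ Icc x₂ x₁, hls s θ x = c * L x := by
    intro x hx
    unfold hls
    rw [← hc]
    congr 1
    apply Tendsto.limUnder_eq
    apply (tendsto_truncated hs1 hs2 hθm hint hKc0 (hKlip x hx)).congr'
    filter_upwards [self_mem_nhdsWithin] with ε hε
    exact (hlsApprox_eq hs1 hθm hint x hε).symm
  set K0 : ℝ := ∫ z in (x₁ - x₂)..(x₁ + x₂), z ^ (-(1+s)) with hK0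
  have hx12 : (0:ℝ) < x₁ - x₂ := by linarith
  have hab1 : x₁ - x₂ ≤ x₁ + x₂ := by linarith
  have hK0n : 0 ≤ K0 := K0_nonneg hx12 hab1
  -- bound on deriv
  obtain ⟨D, hD⟩ := (isCompact_Icc (a := x₂) (b := x₁)).exists_bound_of_continuousOn
    (hC1.continuous_deriv le_rfl).continuousOn
  -- pointwise inequality on Ioc x₂ x₁
  have hpoint : ∀ x ∈ Ioc x₂ x₁,
      c * K0 * ((θ x - θ x₂) * deriv θ x) ≤ c * L x * deriv θ x := by
    intro x hx
    have hxl : x₂ < x := hx.1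
    have hxr : x ≤ x₁ := hx.2
    have hIF : IntegrableOn (fun z => (θ (x + z) - θ (x - z)) / z ^ (1 + s)) (Ioi 0) :=
      intOn_F hs1 hs2 hθm hint (hKlip x ⟨hxl.le, hxr⟩)
    have hLle : L x ≤ (θ x - θ x₂) * K0 :=
      L_le hs1 hs2 hs0 heven hmono hx₂ hxl hxr hIF
    have hd : deriv θ x ≤ 0 := deriv_nonpos_of_antitone hC1 hmono (by linarith)
    have h1 : ((θ x - θ x₂) * K0) * deriv θ x ≤ L x * deriv θ x :=
      mul_le_mul_of_nonpos_right hLle hd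
    have h2 := mul_le_mul_of_nonneg_left h1 hc0
    calc c * K0 * ((θ x - θ x₂) * deriv θ x)
        = c * ((θ x - θ x₂) * K0 * deriv θ x) := by ring
      _ ≤ c * (L x * deriv θ x) := h2
      _ = c * L x * deriv θ x := by ring
  -- the integral on the right
  have hgcont : Continuous (fun x => c * K0 * ((θ x - θ x₂) * deriv θ x)) := by
    apply continuous_const.mul
    exact (hC1.continuous.sub continuous_const).mul (hC1.continuous_deriv le_rfl)
  have hfint : IntegrableOn (fun x => c * L x * deriv θ x) (Ioc x₂ x₁) := by
    set M : ℝ := Kc / (1 - s) + 2 * ∫ t, |θ t| with hM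
    apply Integrable.mono' (g := fun _ => c * M * D)
    · exact (integrableOn_const measure_Ioc_lt_top.ne)
    · exact ((measurable_const.mul (L_meas hθm)).mul
        (hC1.continuous_deriv le_rfl).measurable).aestronglyMeasurable.restrict
    · rw [ae_restrict_iff' measurableSet_Ioc]
      refine ae_of_all _ (fun x hx => ?_)
      have hLb : |L x| ≤ M :=
        L_abs_bound hs1 hs2 hθm hint hKc0 (hKlip x ⟨hx.1.le, hx.2⟩)
      have hDb : |deriv θ x| ≤ D := by
        have := hD x ⟨hx.1.le, hx.2⟩
        rwa [Real.norm_eq_abs] at this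
      have hM0 : 0 ≤ M := le_trans (abs_nonneg _) hLb
      have hD0 : 0 ≤ D := le_trans (abs_nonneg _) hDb
      rw [Real.norm_eq_abs, abs_mul, abs_mul, abs_of_nonneg hc0]
      apply mul_le_mul (mul_le_mul le_rfl hLb (abs_nonneg _) hc0) hDb (abs_nonneg _)
      positivity
  have hstep : (∫ x in Ioc x₂ x₁, c * K0 * ((θ x - θ x₂) * deriv θ x))
      ≤ ∫ x in Ioc x₂ x₁, c * L x * deriv θ x := by
    apply setIntegral_mono_on (hgcont.integrableOn_Ioc) hfint measurableSet_Ioc hpoint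
  -- rewrite goal integral
  have hgoal_eq : (∫ x in x₂..x₁, hls s θ x * deriv θ x)
      = ∫ x in Ioc x₂ x₁, c * L x * deriv θ x := by
    rw [show (∫ x in x₂..x₁, hls s θ x * deriv θ x)
        = ∫ x in x₂..x₁, c * L x * deriv θ x from intervalIntegral.integral_congr (by
      intro x hx
      rw [uIcc_of_le hx₁.le] at hx
      show hls s θ x * deriv θ x = c * L x * deriv θ x
      rw [hls_eq x hx]), intervalIntegral.integral_of_le hx₁.le]
  -- value of left integral
  have hval : (∫ x in Ioc x₂ x₁, c * K0 * ((θ x - θ x₂) * deriv θ x))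
      = c * K0 * ((θ x₁ - θ x₂)^2 / 2) := by
    rw [← intervalIntegral.integral_of_le hx₁.le, intervalIntegral.integral_const_mul,
      ftc hC1 x₂ x₁]
  -- target equals (1-s)/16 * K0 * (θ x₂ - θ x₁)^2
  have hK0v : K0 = ((x₁ - x₂) ^ (-s) - (x₁ + x₂) ^ (-s)) / s := K0_eval hs0 hx12 hab1
  have htarget : ((1 - s) / (16 * s)) * (1 - ((x₁ - x₂) / (x₁ + x₂)) ^ s) *
        ((θ x₂ - θ x₁) ^ 2 / (x₁ - x₂) ^ s)
      = (1 - s) / 16 * K0 * (θ x₂ - θ x₁)^2 := by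
    rw [hK0v]
    have h1 : ((x₁ - x₂) / (x₁ + x₂)) ^ s = (x₁ - x₂) ^ s / (x₁ + x₂) ^ s :=
      Real.div_rpow (by linarith) (by linarith) s
    have h2 : (x₁ - x₂) ^ (-s) = ((x₁ - x₂) ^ s)⁻¹ := Real.rpow_neg (by linarith) s
    have h3 : (x₁ + x₂) ^ (-s) = ((x₁ + x₂) ^ s)⁻¹ := Real.rpow_neg (by linarith) s
    have hp1 : (0:ℝ) < (x₁ - x₂) ^ s := Real.rpow_pos_of_pos hx12 s
    have hp2 : (0:ℝ) < (x₁ + x₂) ^ s := Real.rpow_pos_of_pos (by linarith) s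
    rw [h1, h2, h3]
    field_simp
  rw [hgoal_eq, htarget]
  refine le_trans ?_ (le_trans hstep le_rfl)
  rw [hval]
  have hsq : (θ x₂ - θ x₁)^2 = (θ x₁ - θ x₂)^2 := by ring
  rw [hsq]
  have hfac : 0 ≤ K0 * (θ x₁ - θ x₂)^2 := by positivity
  nlinarith [mul_le_mul_of_nonneg_right hcge hfac]
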